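/- arXiv:1303.0137 — 5 statements merged into one kernel-verified Lean document; each statement's English description precedes it below -/
import Mathlib

section
/- Let A, B be real numbers with -1 ≤ B < A ≤ 1 and let z be a complex number with |z| < 1. Then Re((1 - A B z^2)/((1 + A z)(1 + B z))) > 0. -/
open Complex

lemma half_lemma (w : ℂ) (hw : ‖w‖ < 1) : 1/2 < ((1 + w)⁻¹).re := by
  have hne : (1 : ℂ) + w ≠ 0 := by
    intro h
    have : w = -1 := by linear_combination h
    rw [this] at hw; simp at hw
  have hpos : 0 < Complex.normSq (1 + w) := Complex.normSq_pos.mpr hne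
  rw [Complex.inv_re, lt_div_iff₀ hpos]
  have h1 : Complex.normSq w < 1 := by
    rw [← Complex.sq_norm]; nlinarith [norm_nonneg w]
  have h2 : Complex.normSq (1 + w) = 1 + 2 * w.re + Complex.normSq w := by
    simp [Complex.normSq_apply]; ring
  simp only [Complex.add_re, Complex.one_re]
  nlinarith

theorem stmt_1 (A B : ℝ) (hB : -1 ≤ B) (hBA : B < A) (hA : A ≤ 1)
    (z : ℂ) (hz : ‖z‖ < 1) :
    0 < ((1 - (A : ℂ) * (B : ℂ) * z ^ 2) / ((1 + (A : ℂ) * z) * (1 + (B : ℂ) * z))).re := by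
  have hAabs : |A| ≤ 1 := abs_le.mpr ⟨by linarith, hA⟩
  have hBabs : |B| ≤ 1 := abs_le.mpr ⟨hB, by linarith⟩
  have hAz : ‖(A : ℂ) * z‖ < 1 := by
    rw [norm_mul, Complex.norm_real, Real.norm_eq_abs]
    calc |A| * ‖z‖ ≤ 1 * ‖z‖ := by
          exact mul_le_mul_of_nonneg_right hAabs (norm_nonneg z)
      _ < 1 := by rwa [one_mul]
  have hBz : ‖(B : ℂ) * z‖ < 1 := by
    rw [norm_mul, Complex.norm_real, Real.norm_eq_abs]
    calc |B| * ‖z‖ ≤ 1 * ‖z‖ := by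
          exact mul_le_mul_of_nonneg_right hBabs (norm_nonneg z)
      _ < 1 := by rwa [one_mul]
  have hne1 : (1 : ℂ) + (A : ℂ) * z ≠ 0 := by
    intro h
    have : (A : ℂ) * z = -1 := by linear_combination h
    rw [this] at hAz; simp at hAz
  have hne2 : (1 : ℂ) + (B : ℂ) * z ≠ 0 := by
    intro h
    have : (B : ℂ) * z = -1 := by linear_combination h
    rw [this] at hBz; simp at hBz
  have key : (1 - (A : ℂ) * (B : ℂ) * z ^ 2) / ((1 + (A : ℂ) * z) * (1 + (B : ℂ) * z))
      = -1 + (1 + (A : ℂ) * z)⁻¹ + (1 + (B : ℂ) * z)⁻¹ := by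
    field_simp
    ring
  rw [key]
  have h1 := half_lemma ((A : ℂ) * z) hAz
  have h2 := half_lemma ((B : ℂ) * z) hBz
  simp only [Complex.add_re, Complex.neg_re, Complex.one_re]
  linarith
end

section
/- For every complex number z with |z| < 1, Re(1 - z/(2(1+z))) ≥ 3/4. In particular the function Q(z) = β z/(2√(1+z)) with β > 0 satisfies Re(z Q'(z)/Q(z)) > 0 on the punctured unit disk. -/
open Complex

theorem stmt_2 (z : ℂ) (hz : ‖z‖ < 1) :
    (3 : ℝ) / 4 ≤ (1 - z / (2 * (1 + z))).re ∧
    ∀ β : ℝ, 0 < β → z ≠ 0 →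
      0 < (z * deriv (fun w : ℂ => (β : ℂ) * w / (2 * (1 + w) ^ ((1 : ℂ) / 2))) z /
            ((β : ℂ) * z / (2 * (1 + z) ^ ((1 : ℂ) / 2)))).re := by
  have hre : -1 < z.re := by
    have h1 := Complex.abs_re_le_norm z
    have h2 := neg_abs_le z.re
    linarith
  have hmain : (3 : ℝ) / 4 ≤ (1 - z / (2 * (1 + z))).re := by
    have hn : z.re * z.re + z.im * z.im < 1 := by
      nlinarith [Complex.sq_norm z, Complex.normSq_apply z, norm_nonneg z, hz]
    have hd : 0 < (2*(1+z.re))^2 + (2*z.im)^2 := by nlinarith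
    have heq : (1 - z / (2 * (1 + z))).re
        = 1 - (z.re*(2*(1+z.re)) + z.im*(2*z.im)) / ((2*(1+z.re))^2 + (2*z.im)^2) := by
      rw [Complex.sub_re, Complex.div_re]
      simp [Complex.normSq_apply]
      ring
    rw [heq]
    have key : (z.re*(2*(1+z.re)) + z.im*(2*z.im)) / ((2*(1+z.re))^2 + (2*z.im)^2) ≤ 1/4 := by
      rw [div_le_iff₀ hd]; nlinarith
    linarith
  refine ⟨hmain, fun β hβ hz0 => ?_⟩
  have h0re : 0 < (1 + z).re := by simp [Complex.add_re]; linarith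
  have h0 : (1 + z : ℂ) ≠ 0 := by
    intro h; rw [h] at h0re; simp at h0re
  have key : z * deriv (fun w : ℂ => (β : ℂ) * w / (2 * (1 + w) ^ ((1 : ℂ) / 2))) z /
            ((β : ℂ) * z / (2 * (1 + z) ^ ((1 : ℂ) / 2))) = 1 - z / (2 * (1 + z)) := by
    set s : ℂ := (1 + z) ^ ((1 : ℂ) / 2) with hs
    have hsne : s ≠ 0 := by
      rw [hs]
      simp [Complex.cpow_eq_zero_iff, h0]
    have hss : s * s = 1 + z := by
      rw [hs, ← Complex.cpow_add _ _ h0]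
      norm_num
    have hderiv : HasDerivAt (fun w : ℂ => (β : ℂ) * w / (2 * (1 + w) ^ ((1 : ℂ) / 2)))
        (((β : ℂ) * (2 * s) - (β : ℂ) * z * (2 * (((1:ℂ)/2) * (1 + z) ^ ((1 : ℂ)/2 - 1) * 1))) / (2 * s) ^ 2) z := by
      have h1 : HasDerivAt (fun w : ℂ => (β : ℂ) * w) (β : ℂ) z := by
        simpa using (hasDerivAt_id z).const_mul (β : ℂ)
      have h2 : HasDerivAt (fun w : ℂ => (1 + w)) 1 z := by
        simpa using (hasDerivAt_id z).const_add 1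
      have h3 : HasDerivAt (fun w : ℂ => (1 + w) ^ ((1 : ℂ) / 2))
          (((1:ℂ)/2) * (1 + z) ^ ((1 : ℂ)/2 - 1) * 1) z :=
        h2.cpow_const (Or.inl h0re)
      have h4 := (h3.const_mul (2 : ℂ))
      exact h1.div h4 (mul_ne_zero two_ne_zero hsne)
    rw [hderiv.deriv]
    have hpow : (1 + z) ^ ((1 : ℂ)/2 - 1) = 1 / s := by
      rw [eq_div_iff hsne, hs, ← Complex.cpow_add _ _ h0]
      norm_num
    rw [hpow]
    have hβ' : (β:ℂ) ≠ 0 := by exact_mod_cast hβ.ne'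
    field_simp
    ring_nf
    linear_combination z * hss
  rw [key]
  linarith
end

section
/- Let A, B, β be real numbers with -1 ≤ B < A ≤ 1 and (A - B)β ≥ √2 (1 + |B|)^2 + (1 - B)^2. Then for every real t, |1 + β(A - B) e^{it} / (1 + B e^{it})^2| ≥ √2. -/
open Complex

theorem stmt_6 (A B β : ℝ) (hB : -1 ≤ B) (hBA : B < A) (hA : A ≤ 1)
    (hβ : Real.sqrt 2 * (1 + |B|) ^ 2 + (1 - B) ^ 2 ≤ (A - B) * β)
    (t : ℝ) (hden : 1 + (B : ℂ) * Complex.exp (t * Complex.I) ≠ 0) :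
    Real.sqrt 2 ≤ ‖(1 + (β : ℂ) * ((A : ℂ) - B) * Complex.exp (t * Complex.I) /
      (1 + (B : ℂ) * Complex.exp (t * Complex.I)) ^ 2 : ℂ)‖ := by
  set z : ℂ := Complex.exp (t * Complex.I) with hz
  have hzabs : ‖z‖ = 1 := by
    rw [hz]; exact Complex.norm_exp_ofReal_mul_I t
  set c : ℝ := 2 * B + β * (A - B) with hc
  -- rewrite the expression
  have key : (1 : ℂ) + (β : ℂ) * ((A : ℂ) - B) * z / (1 + (B:ℂ) * z) ^ 2
      = (1 + (c : ℝ) * z + ((B^2 : ℝ) : ℂ) * z^2) / (1 + (B:ℂ) * z)^2 := by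
    rw [hc]
    field_simp
    push_cast
    ring
  rw [key, norm_div]
  have hAB : (0:ℝ) < A - B := by linarith
  have habsB : 0 ≤ |B| := abs_nonneg B
  have h1B : (0:ℝ) < (1 + |B|)^2 := by positivity
  have hsqrt2 : (0:ℝ) ≤ Real.sqrt 2 := Real.sqrt_nonneg 2
  have hB2 : B^2 ≤ |B|^2 := by rw [_root_.sq_abs]
  -- c - 1 - B^2 ≥ √2 (1+|B|)^2
  have hcbig : Real.sqrt 2 * (1 + |B|)^2 + 1 + B^2 ≤ c := by
    have : (1 - B)^2 = 1 - 2*B + B^2 := by ring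
    nlinarith [hβ]
  -- numerator lower bound
  have hnum : c - (1 + B^2) ≤ ‖1 + (c : ℝ) * z + ((B^2 : ℝ) : ℂ) * z^2‖ := by
    have h1 : ‖(c:ℂ) * z‖ = |c| := by
      rw [norm_mul, hzabs, mul_one, Complex.norm_real, Real.norm_eq_abs]
    have h2 : ‖1 + ((B^2 : ℝ) : ℂ) * z^2‖ ≤ 1 + B^2 := by
      calc ‖1 + ((B^2 : ℝ) : ℂ) * z^2‖
          ≤ ‖(1:ℂ)‖ + ‖((B^2 : ℝ) : ℂ) * z^2‖ := norm_add_le _ _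
        _ = 1 + B^2 := by
            rw [norm_mul, norm_pow, hzabs, norm_one, Complex.norm_real, Real.norm_eq_abs, _root_.abs_of_nonneg (sq_nonneg B)]
            ring
    have heq : (1 + (c:ℂ) * z + ((B^2:ℝ):ℂ) * z^2) - (1 + ((B^2:ℝ):ℂ)*z^2) = (c:ℂ)*z := by ring
    have h3 := norm_sub_le (1 + (c:ℂ) * z + ((B^2:ℝ):ℂ) * z^2) (1 + ((B^2:ℝ):ℂ)*z^2)
    rw [heq] at h3
    have hcpos : 0 ≤ c := by nlinarith
    rw [_root_.abs_of_nonneg hcpos] at h1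
    linarith
  -- denominator upper bound
  have hden2 : ‖(1 + (B:ℂ) * z)^2‖ ≤ (1 + |B|)^2 := by
    rw [norm_pow]
    have : ‖1 + (B:ℂ) * z‖ ≤ 1 + |B| := by
      calc ‖1 + (B:ℂ) * z‖ ≤ ‖(1:ℂ)‖ + ‖(B:ℂ) * z‖ :=
            norm_add_le _ _
        _ = 1 + |B| := by rw [norm_one, norm_mul, hzabs, mul_one, Complex.norm_real, Real.norm_eq_abs]
    exact pow_le_pow_left₀ (norm_nonneg _) this 2
  have hdenpos : 0 < ‖(1 + (B:ℂ) * z)^2‖ := by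
    rw [norm_pow]
    exact pow_pos (norm_pos_iff.mpr hden) 2
  have hnn : Real.sqrt 2 * (1 + |B|)^2 ≤ c - (1 + B^2) := by linarith
  calc Real.sqrt 2 = Real.sqrt 2 * (1 + |B|)^2 / (1 + |B|)^2 := by field_simp
    _ ≤ (c - (1 + B^2)) / (1 + |B|)^2 := by
        gcongr
    _ ≤ ‖1 + (c : ℝ) * z + ((B^2 : ℝ) : ℂ) * z^2‖ / ‖(1 + (B:ℂ) * z)^2‖ := by
        apply div_le_div₀ (norm_nonneg _) hnum hdenpos hden2
end

section
/- Let A, B, D, E, β be real numbers with -1 ≤ B < A ≤ 1, -1 ≤ E < D ≤ 1, and |β|(A - B) ≥ (D - E)(1 + |AB|) + |(A + B)(D - E) - Eβ(A - B)|. Then for every real t, |(D - E)(1 + A B e^{2it}) + ((A + B)(D - E) - βE(A - B)) e^{it}| ≤ |β|(A - B). -/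
open Complex

theorem stmt_9 (A B D E β : ℝ) (hB : -1 ≤ B) (hBA : B < A) (hA : A ≤ 1)
    (hE : -1 ≤ E) (hED : E < D) (hD : D ≤ 1)
    (hβ : (D - E) * (1 + |A * B|) + |(A + B) * (D - E) - E * β * (A - B)| ≤ |β| * (A - B))
    (t : ℝ) :
    ‖((D : ℂ) - E) * (1 + (A : ℂ) * (B : ℂ) * Complex.exp (2 * t * Complex.I)) +
      (((A + B) * (D - E) - β * E * (A - B) : ℝ) : ℂ) * Complex.exp (t * Complex.I)‖
      ≤ |β| * (A - B) := by
  have h1 : ‖Complex.exp (t * Complex.I)‖ = 1 := by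
    simpa using Complex.norm_exp_ofReal_mul_I t
  have h2 : ‖Complex.exp (2 * t * Complex.I)‖ = 1 := by
    have := Complex.norm_exp_ofReal_mul_I (2 * t)
    simpa [Complex.ofReal_mul, mul_assoc] using this
  calc ‖((D : ℂ) - E) * (1 + (A : ℂ) * (B : ℂ) * Complex.exp (2 * t * Complex.I)) +
      (((A + B) * (D - E) - β * E * (A - B) : ℝ) : ℂ) * Complex.exp (t * Complex.I)‖
      ≤ ‖((D : ℂ) - E) * (1 + (A : ℂ) * (B : ℂ) * Complex.exp (2 * t * Complex.I))‖
        + ‖(((A + B) * (D - E) - β * E * (A - B) : ℝ) : ℂ) * Complex.exp (t * Complex.I)‖ :=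
        norm_add_le _ _
    _ ≤ (D - E) * (1 + |A * B|) + |(A + B) * (D - E) - E * β * (A - B)| := by
        gcongr ?_ + ?_
        · rw [norm_mul]
          have hDE : ‖(D : ℂ) - E‖ = D - E := by
            rw [← Complex.ofReal_sub, Complex.norm_real, Real.norm_eq_abs, abs_of_pos (by linarith)]
          rw [hDE]
          gcongr
          calc ‖1 + (A : ℂ) * B * Complex.exp (2 * t * Complex.I)‖
              ≤ ‖(1 : ℂ)‖ + ‖(A : ℂ) * B * Complex.exp (2 * t * Complex.I)‖ :=
                norm_add_le _ _
            _ = 1 + |A * B| := by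
                simp [norm_mul, h2, abs_mul]
        · rw [norm_mul, h1, Complex.norm_real, Real.norm_eq_abs, mul_one]
          apply le_of_eq
          congr 1
          ring
    _ ≤ |β| * (A - B) := hβ
end

section
/- Let p be analytic on the open unit disk 𝔻 with p(0) = 1 and suppose there is an analytic function w : 𝔻 → 𝔻 with w(0) = 0 (a Schwarz function) such that p(z) + β z p'(z) = √(1 + w(z)) for all z ∈ 𝔻, where β > 0. Then there exists a Schwarz function w₁ with p(z) = √(1 + w₁(z)) for all z ∈ 𝔻; equivalently |p(z)^2 - 1| < 1 for all z ∈ 𝔻. -/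
open Complex Metric MeasureTheory intervalIntegral Set Filter

private lemma lem_sqrt_ineq {xa ya xb yb t s : ℝ} (ht : 0 ≤ t) (hs : 0 ≤ s) (hts : t + s = 1)
    (ha0 : 0 ≤ xa) (ha : (xa^2+ya^2)^2 ≤ 2*(xa^2-ya^2))
    (hb0 : 0 ≤ xb) (hb : (xb^2+yb^2)^2 ≤ 2*(xb^2-yb^2)) :
    ((t*xa+s*xb)^2+(t*ya+s*yb)^2)^2 ≤ 2*((t*xa+s*xb)^2-(t*ya+s*yb)^2) := by
  have hA0 : (0:ℝ) ≤ 2*(xa^2-ya^2) := le_trans (by positivity) ha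
  have hB0 : (0:ℝ) ≤ 2*(xb^2-yb^2) := le_trans (by positivity) hb
  set A := Real.sqrt (2*(xa^2-ya^2)) with hA
  set B := Real.sqrt (2*(xb^2-yb^2)) with hB
  have hA2 : A^2 = 2*(xa^2-ya^2) := Real.sq_sqrt hA0
  have hB2 : B^2 = 2*(xb^2-yb^2) := Real.sq_sqrt hB0
  have hAnn : 0 ≤ A := Real.sqrt_nonneg _
  have hBnn : 0 ≤ B := Real.sqrt_nonneg _
  have haA : xa^2+ya^2 ≤ A := (Real.le_sqrt (by positivity) hA0).2 ha
  have hbB : xb^2+yb^2 ≤ B := (Real.le_sqrt (by positivity) hB0).2 hb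
  have hya : ya^2 ≤ xa^2 := by nlinarith [sq_nonneg (xa^2+ya^2)]
  have hyb : yb^2 ≤ xb^2 := by nlinarith [sq_nonneg (xb^2+yb^2)]
  have hcn : 0 ≤ xa*xb - ya*yb := by
    have h1 : |ya*yb| ≤ |xa*xb| := by
      rw [← Real.sqrt_sq_eq_abs, ← Real.sqrt_sq_eq_abs]
      exact Real.sqrt_le_sqrt (by nlinarith)
    have h2 : ya*yb ≤ |ya*yb| := le_abs_self _
    have h3 : |xa*xb| = xa*xb := abs_of_nonneg (mul_nonneg ha0 hb0)
    linarith
  have hABle : A*B ≤ 2*(xa*xb - ya*yb) := by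
    have h1 : A*B = Real.sqrt ((2*(xa^2-ya^2))*(2*(xb^2-yb^2))) := (Real.sqrt_mul hA0 _).symm
    have h2 : (2*(xa^2-ya^2))*(2*(xb^2-yb^2)) ≤ (2*(xa*xb - ya*yb))^2 := by
      nlinarith [sq_nonneg (xa*yb - xb*ya)]
    calc A*B = Real.sqrt ((2*(xa^2-ya^2))*(2*(xb^2-yb^2))) := h1
      _ ≤ Real.sqrt ((2*(xa*xb - ya*yb))^2) := Real.sqrt_le_sqrt h2
      _ = 2*(xa*xb - ya*yb) := Real.sqrt_sq (by linarith)
  have hm : (t*xa+s*xb)^2+(t*ya+s*yb)^2 ≤ t*A+s*B := by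
    have h1 : (t*xa+s*xb)^2+(t*ya+s*yb)^2 ≤ t*(xa^2+ya^2) + s*(xb^2+yb^2) := by
      nlinarith [sq_nonneg (xa-xb), sq_nonneg (ya-yb), mul_nonneg ht hs]
    have h2 : t*(xa^2+ya^2) + s*(xb^2+yb^2) ≤ t*A + s*B :=
      add_le_add (mul_le_mul_of_nonneg_left haA ht) (mul_le_mul_of_nonneg_left hbB hs)
    linarith
  have key : 2*(t*s)*(A*B) ≤ 2*(t*s)*(2*(xa*xb-ya*yb)) :=
    mul_le_mul_of_nonneg_left hABle (by positivity)
  have expand : 2*((t*xa+s*xb)^2-(t*ya+s*yb)^2)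
      = t^2*A^2 + s^2*B^2 + 4*(t*s)*(xa*xb-ya*yb) := by rw [hA2, hB2]; ring
  have key2 : 2*(t*s)*(A*B) ≤ 4*(t*s)*(xa*xb-ya*yb) := by linarith [key]
  have e2 : (t*A+s*B)^2 = t^2*A^2+s^2*B^2+2*(t*s)*(A*B) := by ring
  have hsq : (t*A+s*B)^2 ≤ 2*((t*xa+s*xb)^2-(t*ya+s*yb)^2) := by
    rw [expand, e2]; linarith [key2]
  have hgoal : ((t*xa+s*xb)^2+(t*ya+s*yb)^2)^2 ≤ (t*A+s*B)^2 :=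
    pow_le_pow_left₀ (by positivity) hm 2
  linarith

private lemma lem_mem_iff (v : ℂ) :
    ‖v^2 - 1‖ ≤ 1 ↔ (v.re^2 + v.im^2)^2 ≤ 2*(v.re^2 - v.im^2) := by
  have h1 : (‖v^2-1‖)^2 = Complex.normSq (v^2-1) := Complex.sq_norm _
  have h2 : Complex.normSq (v^2-1) = (v.re^2+v.im^2)^2 - 2*(v.re^2-v.im^2) + 1 := by
    simp [Complex.normSq_apply, pow_two, Complex.mul_re, Complex.mul_im, Complex.sub_re,
      Complex.sub_im]
    ring
  have h3 : 0 ≤ ‖v^2-1‖ := norm_nonneg _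
  constructor
  · intro h; nlinarith [h1, h2]
  · intro h; nlinarith [h1, h2]

private lemma lem_convexC : Convex ℝ {v : ℂ | 0 ≤ v.re ∧ ‖v^2 - 1‖ ≤ 1} := by
  intro a ha b hb t s ht hs hts
  have hre : (t • a + s • b).re = t * a.re + s * b.re := by
    simp [Complex.add_re, Complex.real_smul]
  have him : (t • a + s • b).im = t * a.im + s * b.im := by
    simp [Complex.add_im, Complex.real_smul]
  constructor
  · rw [Set.mem_setOf_eq] at *
    rw [hre]
    exact add_nonneg (mul_nonneg ht ha.1) (mul_nonneg hs hb.1)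
  · rw [lem_mem_iff, hre, him]
    exact lem_sqrt_ineq ht hs hts ha.1 ((lem_mem_iff a).1 ha.2) hb.1 ((lem_mem_iff b).1 hb.2)


private lemma lem_re_pos_of_abs {u : ℂ} (h : ‖u - 1‖ < 1) : 0 < u.re := by
  have h1 : (‖u-1‖)^2 < 1 := by
    nlinarith [norm_nonneg (u-1)]
  rw [Complex.sq_norm, Complex.normSq_apply] at h1
  simp only [Complex.sub_re, Complex.sub_im, Complex.one_re, Complex.one_im] at h1
  nlinarith [sq_nonneg u.re, sq_nonneg u.im]

private lemma lem_sqrt_sq (u : ℂ) : (u ^ ((1:ℂ)/2))^2 = u := by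
  rw [one_div]
  exact_mod_cast Complex.cpow_ofNat_inv_pow u 2

private lemma lem_sqrt_re_pos {u : ℂ} (h : 0 < u.re) : 0 < (u ^ ((1:ℂ)/2)).re := by
  have hu0 : u ≠ 0 := fun h0 => by simp [h0] at h
  have harg : |u.arg| < Real.pi / 2 := Complex.abs_arg_lt_pi_div_two_iff.2 (Or.inl h)
  rw [Complex.cpow_def_of_ne_zero hu0, Complex.exp_re]
  have him : (Complex.log u * ((1:ℂ)/2)).im = u.arg / 2 := by
    simp [Complex.mul_im, Complex.log_im]
    ring
  rw [him]
  have hpi := Real.pi_pos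
  have hcos : 0 < Real.cos (u.arg / 2) := by
    rw [abs_lt] at harg
    exact Real.cos_pos_of_mem_Ioo ⟨by linarith [harg.1], by linarith [harg.2]⟩
  positivity

private lemma lem_sqrtval {x : ℂ} (hx : ‖x‖ < 1) :
    0 < ((1+x) ^ ((1:ℂ)/2)).re ∧ ‖((1+x) ^ ((1:ℂ)/2))^2 - 1‖ < 1 := by
  have hre : 0 < (1+x).re := by
    have h1 : |x.re| < 1 := lt_of_le_of_lt (Complex.abs_re_le_norm x) hx
    rw [abs_lt] at h1
    simp only [Complex.add_re, Complex.one_re]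
    linarith [h1.1]
  exact ⟨lem_sqrt_re_pos hre, by rw [lem_sqrt_sq]; simpa using hx⟩


private lemma lem_closedC : IsClosed {v : ℂ | 0 ≤ v.re ∧ ‖v^2 - 1‖ ≤ 1} := by
  apply IsClosed.inter
  · exact isClosed_le continuous_const Complex.continuous_re
  · exact isClosed_le (continuous_norm.comp ((continuous_pow 2).sub continuous_const))
      continuous_const


theorem stmt_12 (p : ℂ → ℂ) (β : ℝ) (hβ : 0 < β)
    (hp : DifferentiableOn ℂ p (ball (0 : ℂ) 1)) (hp0 : p 0 = 1)
    (w : ℂ → ℂ) (hw : DifferentiableOn ℂ w (ball (0 : ℂ) 1)) (hw0 : w 0 = 0)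
    (hwmap : ∀ z ∈ ball (0 : ℂ) 1, w z ∈ ball (0 : ℂ) 1)
    (heq : ∀ z ∈ ball (0 : ℂ) 1,
      p z + (β : ℂ) * z * deriv p z = (1 + w z) ^ ((1 : ℂ) / 2)) :
    (∃ w₁ : ℂ → ℂ, DifferentiableOn ℂ w₁ (ball (0 : ℂ) 1) ∧ w₁ 0 = 0 ∧
        (∀ z ∈ ball (0 : ℂ) 1, w₁ z ∈ ball (0 : ℂ) 1) ∧
        ∀ z ∈ ball (0 : ℂ) 1, p z = (1 + w₁ z) ^ ((1 : ℂ) / 2)) ∧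
    ∀ z ∈ ball (0 : ℂ) 1, ‖(p z) ^ 2 - 1‖ < 1 := by
  have hball : ∀ z : ℂ, z ∈ ball (0:ℂ) 1 → ‖z‖ < 1 := by
    intro z hz; simpa [Complex.dist_eq] using mem_ball.1 hz
  set C : Set ℂ := {v : ℂ | 0 ≤ v.re ∧ ‖v^2 - 1‖ ≤ 1} with hCdef
  have hc : (0:ℝ) < 1/β := by positivity
  set c : ℝ := 1/β with hc_def
  have hC : ∀ z ∈ ball (0:ℂ) 1, p z ∈ C := by
    intro z hz
    by_cases hz0 : z = 0
    · subst hz0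
      constructor <;> simp [hp0]
    -- setup
    have hmemball : ∀ s : ℝ, s ∈ Set.Icc (0:ℝ) 1 → (s:ℂ)*z ∈ ball (0:ℂ) 1 := by
      intro s hs
      rw [mem_ball_zero_iff, norm_mul, Complex.norm_real, Real.norm_eq_abs,
        _root_.abs_of_nonneg hs.1]
      calc s * ‖z‖ ≤ 1 * ‖z‖ := by
            apply mul_le_mul_of_nonneg_right hs.2 (norm_nonneg z)
        _ < 1 := by rw [one_mul]; exact mem_ball_zero_iff.1 hz
    set H : ℝ → ℂ := fun s => (1 + w ((s:ℂ)*z)) ^ ((1:ℂ)/2) with hHdef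
    have hwb : ∀ s ∈ Set.Icc (0:ℝ) 1, ‖w ((s:ℂ)*z)‖ < 1 :=
      fun s hs => hball _ (hwmap _ (hmemball s hs))
    have hHC : ∀ s ∈ Set.Icc (0:ℝ) 1, H s ∈ C := by
      intro s hs
      obtain ⟨h1, h2⟩ := lem_sqrtval (hwb s hs)
      exact ⟨h1.le, h2.le⟩
    have hre1 : ∀ s ∈ Set.Icc (0:ℝ) 1, 0 < (1 + w ((s:ℂ)*z)).re := by
      intro s hs
      have h1 : |(w ((s:ℂ)*z)).re| < 1 :=
        lt_of_le_of_lt (Complex.abs_re_le_norm _) (hwb s hs)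
      rw [abs_lt] at h1
      simp only [Complex.add_re, Complex.one_re]
      linarith [h1.1]
    have hinner : Continuous fun s : ℝ => (s:ℂ)*z :=
      Complex.continuous_ofReal.mul continuous_const
    have hwcont : ContinuousOn (fun s : ℝ => 1 + w ((s:ℂ)*z)) (Set.Icc (0:ℝ) 1) := by
      apply ContinuousOn.add continuousOn_const
      exact hw.continuousOn.comp hinner.continuousOn (fun x hx => hmemball x hx)
    have hHcont : ContinuousOn H (Set.Icc (0:ℝ) 1) := by
      intro s hs
      exact (hwcont s hs).cpow continuousWithinAt_const
        (Complex.mem_slitPlane_iff.2 (Or.inl (hre1 s hs)))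
    set F : ℝ → ℂ := fun s => ((c * s ^ (c-1) : ℝ) : ℂ) * H s with hFdef
    set φ : ℝ → ℂ := fun s : ℝ => (s ^ c : ℝ) • p ((s:ℂ)*z) with hφdef
    have hderiv : ∀ s ∈ Set.Ioo (0:ℝ) 1, HasDerivAt φ (F s) s := by
      intro s hs
      have hs0 : 0 < s := hs.1
      have hsz : (s:ℂ)*z ∈ ball (0:ℂ) 1 := hmemball s ⟨hs.1.le, hs.2.le⟩
      have hpd : HasDerivAt p (deriv p ((s:ℂ)*z)) ((s:ℂ)*z) :=
        (hp.differentiableAt (isOpen_ball.mem_nhds hsz)).hasDerivAt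
      have hin : HasDerivAt (fun u : ℂ => p (u*z)) (deriv p ((s:ℂ)*z) * z) (s:ℂ) :=
        HasDerivAt.comp _ hpd (hasDerivAt_mul_const z)
      have hinR : HasDerivAt (fun y : ℝ => p ((y:ℂ)*z)) (deriv p ((s:ℂ)*z) * z) s :=
        hin.comp_ofReal
      have hrp : HasDerivAt (fun y : ℝ => y ^ c) (c * s ^ (c-1)) s :=
        Real.hasDerivAt_rpow_const (Or.inl hs0.ne')
      have hprod := hrp.smul hinR
      convert hprod using 1
      · rfl
      · rfl
      have hkey : (s:ℝ)^c = (c * s^(c-1)) * (β * s) := by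
        have h1 : s^(c-1) * s = s^c := by
          rw [← Real.rpow_add_one hs0.ne']; ring_nf
        have hcb : c * β = 1 := by rw [hc_def]; field_simp
        calc (s:ℝ)^c = (c*β) * (s^(c-1) * s) := by rw [hcb, h1, one_mul]
          _ = (c * s^(c-1)) * (β * s) := by ring
      have keyC : ((s ^ c : ℝ) : ℂ) = ((c * s^(c-1) : ℝ) : ℂ) * ((β : ℂ) * (s:ℂ)) := by
        rw [hkey]; push_cast; ring
      rw [hFdef]
      simp only
      rw [show H s = p ((s:ℂ)*z) + (β:ℂ) * ((s:ℂ)*z) * deriv p ((s:ℂ)*z) from (heq _ hsz).symm]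
      simp only [Complex.real_smul, hφdef]
      linear_combination (-keyC) * (deriv p ((s:ℂ)*z) * z)
    have hbase : IntervalIntegrable (fun s : ℝ => c * s^(c-1)) volume 0 1 :=
      (intervalIntegrable_rpow' (by linarith)).const_mul c
    have hbaseC : IntervalIntegrable (fun s : ℝ => ((c * s^(c-1) : ℝ) : ℂ)) volume 0 1 := by
      rw [intervalIntegrable_iff] at hbase ⊢
      exact hbase.ofReal
    have hFint : IntervalIntegrable F volume 0 1 := by
      apply hbaseC.mul_continuousOn
      rwa [Set.uIcc_of_le (zero_le_one)]
    have htend0 : Tendsto φ (nhdsWithin 0 (Set.Ioi (0:ℝ))) (nhds 0) := by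
      have h1 : Tendsto (fun s : ℝ => s ^ c) (nhds 0) (nhds 0) := by
        have := (Real.continuousAt_rpow_const 0 c (Or.inr hc.le)).tendsto
        simpa [Real.zero_rpow hc.ne'] using this
      have h2 : Tendsto (fun s : ℝ => p ((s:ℂ)*z)) (nhds 0) (nhds 1) := by
        have hi : Tendsto (fun s : ℝ => (s:ℂ)*z) (nhds 0) (nhds 0) := by
          simpa using hinner.tendsto 0
        have hpt : Tendsto p (nhds 0) (nhds 1) := by
          simpa [hp0] using
            ((hp.differentiableAt (isOpen_ball.mem_nhds
              (mem_ball_self one_pos))).continuousAt).tendsto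
        exact hpt.comp hi
      have := h1.smul h2
      simp only [zero_smul] at this
      exact this.mono_left nhdsWithin_le_nhds
    have htend1 : Tendsto φ (nhdsWithin 1 (Set.Iio (1:ℝ))) (nhds (p z)) := by
      have h1 : Tendsto (fun s : ℝ => s ^ c) (nhds 1) (nhds 1) := by
        have := (Real.continuousAt_rpow_const 1 c (Or.inl one_ne_zero)).tendsto
        simpa [Real.one_rpow] using this
      have h2 : Tendsto (fun s : ℝ => p ((s:ℂ)*z)) (nhds 1) (nhds (p z)) := by
        have hi : Tendsto (fun s : ℝ => (s:ℂ)*z) (nhds 1) (nhds z) := by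
          simpa using hinner.tendsto 1
        have hpt : Tendsto p (nhds z) (nhds (p z)) :=
          ((hp.differentiableAt (isOpen_ball.mem_nhds hz)).continuousAt).tendsto
        exact hpt.comp hi
      have := h1.smul h2
      simp only [one_smul] at this
      exact this.mono_left nhdsWithin_le_nhds
    have hFTC : ∫ s in (0:ℝ)..1, F s = p z - 0 :=
      intervalIntegral.integral_eq_sub_of_hasDerivAt_of_tendsto zero_lt_one hderiv hFint
        htend0 htend1
    -- measure theory
    set g0 : ℝ → NNReal := fun s => Real.toNNReal (c * s^(c-1)) with hg0def
    have hg0m : Measurable g0 :=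
      ((measurable_id'.pow_const (c-1)).const_mul c).real_toNNReal
    set ν : Measure ℝ := volume.restrict (Set.Ioc (0:ℝ) 1) with hνdef
    set μ : Measure ℝ := ν.withDensity (fun s => (g0 s : ENNReal)) with hμdef
    have hgF : ∀ s ∈ Set.Ioc (0:ℝ) 1, (g0 s : ℝ) = c * s^(c-1) := by
      intro s hs
      exact Real.coe_toNNReal _ (mul_nonneg hc.le (Real.rpow_nonneg hs.1.le _))
    have hIntOn : IntegrableOn (fun s : ℝ => c * s^(c-1)) (Set.Ioc (0:ℝ) 1) volume :=
      (intervalIntegrable_iff_integrableOn_Ioc_of_le zero_le_one).1 hbase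
    have hval : ∫ s in Set.Ioc (0:ℝ) 1, c * s^(c-1) = 1 := by
      rw [← intervalIntegral.integral_of_le zero_le_one,
        intervalIntegral.integral_const_mul, integral_rpow (Or.inl (by linarith))]
      have h1 : c - 1 + 1 = c := by ring
      rw [h1, Real.one_rpow, Real.zero_rpow hc.ne']
      field_simp
      norm_num
    have hprob : IsProbabilityMeasure μ := by
      constructor
      rw [hμdef, withDensity_apply _ MeasurableSet.univ, setLIntegral_univ]
      have hcoe : (fun s => (g0 s : ENNReal)) = fun s => ENNReal.ofReal (c * s^(c-1)) := rfl
      rw [hcoe, hνdef]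
      rw [← ofReal_integral_eq_lintegral_ofReal hIntOn
        ((ae_restrict_iff' measurableSet_Ioc).2 (ae_of_all _ fun s hs =>
          mul_nonneg hc.le (Real.rpow_nonneg hs.1.le _)))]
      rw [hval]; norm_num
    have hsmuleq : (fun s => g0 s • H s) =ᵐ[ν] F := by
      apply (ae_restrict_iff' measurableSet_Ioc).2
      apply ae_of_all
      intro s hs
      show g0 s • H s = ((c * s ^ (c-1) : ℝ) : ℂ) * H s
      rw [NNReal.smul_def, hgF s hs, Complex.real_smul]
    have hInteg : Integrable H μ := by
      rw [hμdef]
      rw [integrable_withDensity_iff_integrable_smul hg0m]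
      exact hFint.1.congr hsmuleq.symm
    have hmemae : ∀ᵐ s ∂μ, H s ∈ C := by
      apply Filter.Eventually.filter_mono (withDensity_absolutelyContinuous ν _).ae_le
      apply (ae_restrict_iff' measurableSet_Ioc).2
      exact ae_of_all _ fun s hs => hHC s ⟨hs.1.le, hs.2⟩
    haveI := hprob
    have hmem : (∫ s, H s ∂μ) ∈ C :=
      lem_convexC.integral_mem lem_closedC hmemae hInteg
    have hval2 : (∫ s, H s ∂μ) = p z := by
      rw [hμdef, integral_withDensity_eq_integral_smul hg0m,
        integral_congr_ae hsmuleq, hνdef,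
        ← intervalIntegral.integral_of_le zero_le_one, hFTC, sub_zero]
    rwa [hval2] at hmem
  have hCmain : ∀ z ∈ ball (0:ℂ) 1, 0 ≤ (p z).re ∧ ‖p z^2 - 1‖ ≤ 1 := hC
  clear hC
  have hf : DifferentiableOn ℂ (fun z => p z^2 - 1) (ball (0:ℂ) 1) :=
    (hp.pow 2).sub_const 1
  have hlt : ∀ z ∈ ball (0:ℂ) 1, ‖p z^2 - 1‖ < 1 := by
    intro z hz
    rcases lt_or_eq_of_le (hCmain z hz).2 with h | h
    · exact h
    exfalso
    have hmax : IsMaxOn (norm ∘ (fun z => p z^2 - 1)) (ball (0:ℂ) 1) z := by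
      intro x hx
      simp only [Set.mem_setOf_eq, Function.comp_apply, h]
      exact (hCmain x hx).2
    have heqc := Complex.eqOn_of_isPreconnected_of_isMaxOn_norm
      (convex_ball (0:ℂ) 1).isPreconnected isOpen_ball hf hz hmax
    have h0 := heqc (mem_ball_self one_pos)
    simp only [Function.const_apply, hp0, one_pow, sub_self] at h0
    rw [← h0] at h
    simp at h
  have hre : ∀ z ∈ ball (0:ℂ) 1, 0 < (p z).re := by
    have hne : ∀ x ∈ ball (0:ℂ) 1, (p x).re ≠ 0 := by
      intro x hx h0
      have h1 := hlt x hx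
      have h2 : 0 < (p x^2).re := lem_re_pos_of_abs h1
      have h3 : (p x^2).re = (p x).re^2 - (p x).im^2 := by
        rw [pow_two, Complex.mul_re]; ring
      nlinarith [sq_nonneg (p x).im]
    intro z hz
    rcases (hne z hz).lt_or_gt with hneg | hpos
    · exfalso
      have hcont : ContinuousOn (fun x => (p x).re) (ball (0:ℂ) 1) :=
        Complex.continuous_re.comp_continuousOn hp.continuousOn
      have hiv := (convex_ball (0:ℂ) 1).isPreconnected.intermediate_value hz
        (mem_ball_self one_pos) hcont
      have h0mem : (0:ℝ) ∈ Set.Icc ((p z).re) ((p 0).re) := by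
        rw [hp0]; exact ⟨hneg.le, by norm_num⟩
      obtain ⟨x, hx, hx0⟩ := hiv h0mem
      exact hne x hx hx0
    · exact hpos
  refine ⟨⟨fun z => p z^2 - 1, hf, by simp [hp0], ?_, ?_⟩, hlt⟩
  · intro z hz
    rw [mem_ball_zero_iff]
    exact hlt z hz
  · intro z hz
    have h1 : 1 + (p z^2 - 1) = p z^2 := by ring
    rw [h1, one_div]
    exact (Complex.sq_cpow_two_inv (hre z hz)).symm
end
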